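/- Well-definedness of the scaling factor β_σ: if there exists a feasible θ ∈ ℝ^r (i.e., ‖θ‖² ≤ Γ_f² and (y − Aᵀθ)ᵀ P_j (y − Aᵀθ) ≤ Γ_{w,j}² for all j), then for every σ ∈ ℝ^{n_con} with all σ_j > 0 one has yᵀ K̂_σ⁻¹ y ≤ Γ_f² + Σ_{j=1}^{n_con} Γ_{w,j}²/σ_j², so the argument of the square root defining β_σ is nonnegative. If a strictly feasible θ exists, the inequality is strict and β_σ > 0. -/

import Mathlib

open Matrix

/-- Aggregated noise-shape matrix `P_σ := ∑ j σ_j⁻² P_j`. -/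
noncomputable def Pagg {N n_con : ℕ} (P : Fin n_con → Matrix (Fin N) (Fin N) ℝ)
    (σ : Fin n_con → ℝ) : Matrix (Fin N) (Fin N) ℝ :=
  ∑ j, ((σ j) ^ 2)⁻¹ • P j

/-- Gram matrix `K̂_σ := AᵀA + P_σ⁻¹`. -/
noncomputable def Khat {r N n_con : ℕ} (A : Matrix (Fin r) (Fin N) ℝ)
    (P : Fin n_con → Matrix (Fin N) (Fin N) ℝ) (σ : Fin n_con → ℝ) :
    Matrix (Fin N) (Fin N) ℝ :=
  Aᵀ * A + (Pagg P σ)⁻¹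

/-- Posterior-mean coefficient vector `θ^μ_σ := A K̂_σ⁻¹ y`. -/
noncomputable def θmean {r N n_con : ℕ} (A : Matrix (Fin r) (Fin N) ℝ) (y : Fin N → ℝ)
    (P : Fin n_con → Matrix (Fin N) (Fin N) ℝ) (σ : Fin n_con → ℝ) : Fin r → ℝ :=
  A *ᵥ ((Khat A P σ)⁻¹ *ᵥ y)

/-- Shape matrix `S_σ := I_r + A P_σ Aᵀ`. -/
noncomputable def Smat {r N n_con : ℕ} (A : Matrix (Fin r) (Fin N) ℝ)
    (P : Fin n_con → Matrix (Fin N) (Fin N) ℝ) (σ : Fin n_con → ℝ) :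
    Matrix (Fin r) (Fin r) ℝ :=
  1 + A * Pagg P σ * Aᵀ

/-- Scaling factor `β_σ := √(Γ_f² + ∑ j Γ_{w,j}²/σ_j² − yᵀ K̂_σ⁻¹ y)`. -/
noncomputable def βfac {r N n_con : ℕ} (A : Matrix (Fin r) (Fin N) ℝ) (y : Fin N → ℝ)
    (Γf : ℝ) (Γw : Fin n_con → ℝ) (P : Fin n_con → Matrix (Fin N) (Fin N) ℝ)
    (σ : Fin n_con → ℝ) : ℝ :=
  Real.sqrt (Γf ^ 2 + ∑ j, (Γw j) ^ 2 / (σ j) ^ 2 - y ⬝ᵥ ((Khat A P σ)⁻¹ *ᵥ y))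

/-- The GP-type dual function `F(σ) := qᵀθ^μ_σ + β_σ √(qᵀ S_σ⁻¹ q)`. -/
noncomputable def dualF {r N n_con : ℕ} (A : Matrix (Fin r) (Fin N) ℝ) (y : Fin N → ℝ)
    (q : Fin r → ℝ) (Γf : ℝ) (Γw : Fin n_con → ℝ)
    (P : Fin n_con → Matrix (Fin N) (Fin N) ℝ) (σ : Fin n_con → ℝ) : ℝ :=
  q ⬝ᵥ θmean A y P σ + βfac A y Γf Γw P σ * Real.sqrt (q ⬝ᵥ ((Smat A P σ)⁻¹ *ᵥ q))


lemma transpose_mul_self_psd (r n : ℕ) (A : Matrix (Fin r) (Fin n) ℝ) : (Aᵀ * A).PosSemidef := by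
  simpa using posSemidef_conjTranspose_mul_self A

lemma smul_psd (n : ℕ) (c : ℝ) (hc : 0 ≤ c) (A : Matrix (Fin n) (Fin n) ℝ) (h : A.PosSemidef) :
    (c • A).PosSemidef := by
  refine posSemidef_iff_dotProduct_mulVec.mpr ⟨?_, ?_⟩
  · have hA : Aᵀ = A := IsSymm.eq (by simpa using h.1)
    unfold Matrix.IsHermitian
    simp [hA]
  · intro x
    have := h.dotProduct_mulVec_nonneg x
    simp only [smul_mulVec, dotProduct_smul, smul_eq_mul]
    exact mul_nonneg hc (by simpa using this)

lemma sum_mulVec' (N : ℕ) (k : ℕ) (P : Fin k → Matrix (Fin N) (Fin N) ℝ) (y : Fin N → ℝ) :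
    (∑ j, P j) *ᵥ y = ∑ j, (P j *ᵥ y) := by
  ext i
  simp [mulVec, dotProduct, Matrix.sum_apply, Finset.sum_mul]
  rw [Finset.sum_comm]

lemma dotProduct_sum' (N k : ℕ) (f : Fin k → Fin N → ℝ) (x : Fin N → ℝ) :
    x ⬝ᵥ (∑ j, f j) = ∑ j, x ⬝ᵥ f j := by
  simp [dotProduct, Finset.sum_apply, Finset.mul_sum]
  rw [Finset.sum_comm]

lemma key_ineq (r n : ℕ) (A : Matrix (Fin r) (Fin n) ℝ) (W : Matrix (Fin n) (Fin n) ℝ)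
    (hW : W.PosDef) (y : Fin n → ℝ) (θ : Fin r → ℝ) :
    y ⬝ᵥ ((Aᵀ * A + W⁻¹)⁻¹ *ᵥ y) ≤ θ ⬝ᵥ θ + (y - Aᵀ *ᵥ θ) ⬝ᵥ (W *ᵥ (y - Aᵀ *ᵥ θ)) := by
  have hWsym : Wᵀ = W := IsSymm.eq (by simpa using hW.1)
  have hK : (Aᵀ * A + W⁻¹).PosDef := by
    have := hW.inv.add_posSemidef (transpose_mul_self_psd r n A)
    rwa [add_comm] at this
  set K := Aᵀ * A + W⁻¹ with hKdef
  have hKunit : IsUnit K.det := hK.det_pos.ne'.isUnit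
  have hWunit : IsUnit W.det := hW.det_pos.ne'.isUnit
  set x := K⁻¹ *ᵥ y with hx
  have hy : K *ᵥ x = y := by
    rw [hx, mulVec_mulVec, Matrix.mul_nonsing_inv _ hKunit, one_mulVec]
  set u := A *ᵥ x with hu
  set v := W⁻¹ *ᵥ x with hv
  have hWv : W *ᵥ v = x := by
    rw [hv, mulVec_mulVec, Matrix.mul_nonsing_inv _ hWunit, one_mulVec]
  have hyd : y = Aᵀ *ᵥ u + v := by
    rw [← hy, hKdef, add_mulVec, ← mulVec_mulVec]
  set d := u - θ with hd
  set e := Aᵀ *ᵥ d with he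
  have hz : y - Aᵀ *ᵥ θ = e + v := by
    rw [hyd, he, hd, mulVec_sub]; abel
  -- e ⬝ᵥ x = d ⬝ᵥ u
  have h4 : e ⬝ᵥ x = d ⬝ᵥ u := by
    rw [he, mulVec_transpose, ← dotProduct_mulVec, dotProduct_comm, ← hu]
  -- LHS
  have hLHS : y ⬝ᵥ (K⁻¹ *ᵥ y) = u ⬝ᵥ u + v ⬝ᵥ (W *ᵥ v) := by
    rw [← hx]
    calc y ⬝ᵥ x = (Aᵀ *ᵥ u + v) ⬝ᵥ x := by rw [← hyd]
    _ = (Aᵀ *ᵥ u) ⬝ᵥ x + v ⬝ᵥ x := add_dotProduct _ _ _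
    _ = u ⬝ᵥ u + v ⬝ᵥ (W *ᵥ v) := by
        rw [mulVec_transpose, ← dotProduct_mulVec, dotProduct_comm u (A *ᵥ x), ← hu, hWv]
  -- v ⬝ᵥ (W *ᵥ e) = d ⬝ᵥ u
  have h5 : v ⬝ᵥ (W *ᵥ e) = d ⬝ᵥ u := by
    rw [dotProduct_mulVec, ← mulVec_transpose, hWsym, hWv, dotProduct_comm, h4]
  -- e ⬝ᵥ (W *ᵥ v) = d ⬝ᵥ u
  have h6 : e ⬝ᵥ (W *ᵥ v) = d ⬝ᵥ u := by rw [hWv, h4]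
  have hquad : (y - Aᵀ *ᵥ θ) ⬝ᵥ (W *ᵥ (y - Aᵀ *ᵥ θ))
      = e ⬝ᵥ (W *ᵥ e) + 2 * (d ⬝ᵥ u) + v ⬝ᵥ (W *ᵥ v) := by
    simp only [hz, mulVec_add, dotProduct_add, add_dotProduct, h5, h6]
    ring
  have hθ : θ ⬝ᵥ θ = u ⬝ᵥ u - 2 * (d ⬝ᵥ u) + d ⬝ᵥ d := by
    simp only [hd, sub_dotProduct, dotProduct_sub, dotProduct_comm θ u]
    ring
  have hdd : 0 ≤ d ⬝ᵥ d := Finset.sum_nonneg fun i _ => mul_self_nonneg _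
  have hee : 0 ≤ e ⬝ᵥ (W *ᵥ e) := by simpa using hW.posSemidef.dotProduct_mulVec_nonneg e
  rw [hLHS, hquad, hθ]
  linarith

lemma Pagg_posDef {N n_con : ℕ} (P : Fin n_con → Matrix (Fin N) (Fin N) ℝ)
    (hP : ∀ j, (P j).PosSemidef) (hPsum : (∑ j, P j).PosDef)
    (σ : Fin n_con → ℝ) (hσ : ∀ j, 0 < σ j) : (Pagg P σ).PosDef := by
  refine posDef_iff_dotProduct_mulVec.mpr ⟨?_, ?_⟩
  · have : ∀ j, (((σ j)^2)⁻¹ • P j).PosSemidef := fun j =>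
      smul_psd N _ (by positivity) _ (hP j)
    unfold Matrix.IsHermitian Pagg
    simp only [conjTranspose_sum]
    exact Finset.sum_congr rfl fun j _ => (this j).1
  · intro x hx
    have hterm : ∀ j, 0 ≤ x ⬝ᵥ (P j *ᵥ x) := fun j => by simpa using (hP j).dotProduct_mulVec_nonneg x
    have hpos : 0 < ∑ j, x ⬝ᵥ (P j *ᵥ x) := by
      have := hPsum.dotProduct_mulVec_pos hx
      simpa [sum_mulVec', dotProduct_sum'] using this
    have hex : ∃ j, 0 < x ⬝ᵥ (P j *ᵥ x) := by
      by_contra h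
      push_neg at h
      have : ∑ j, x ⬝ᵥ (P j *ᵥ x) ≤ 0 :=
        Finset.sum_nonpos fun j _ => h j
      linarith
    obtain ⟨j0, hj0⟩ := hex
    have : 0 < ∑ j, (((σ j)^2)⁻¹ * (x ⬝ᵥ (P j *ᵥ x))) := by
      apply Finset.sum_pos' (fun j _ => mul_nonneg (by positivity) (hterm j))
      exact ⟨j0, Finset.mem_univ j0, mul_pos (by have := hσ j0; positivity) hj0⟩
    simpa [Pagg, sum_mulVec', dotProduct_sum', smul_mulVec] using this

/-- Well-definedness of the scaling factor `β_σ`: feasibility implies that the argument of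
the square root defining `β_σ` is nonnegative; strict feasibility makes it positive, so
`β_σ > 0`. -/
theorem beta_well_defined
    (r N n_con : ℕ) (hn : 1 ≤ n_con)
    (A : Matrix (Fin r) (Fin N) ℝ) (y : Fin N → ℝ)
    (Γf : ℝ) (hΓf : 0 < Γf)
    (Γw : Fin n_con → ℝ) (hΓw : ∀ j, 0 < Γw j)
    (P : Fin n_con → Matrix (Fin N) (Fin N) ℝ)
    (hP : ∀ j, (P j).PosSemidef)
    (hPsum : (∑ j, P j).PosDef) :
    ((∃ θ : Fin r → ℝ, θ ⬝ᵥ θ ≤ Γf ^ 2 ∧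
        ∀ j, (y - Aᵀ *ᵥ θ) ⬝ᵥ (P j *ᵥ (y - Aᵀ *ᵥ θ)) ≤ (Γw j) ^ 2) →
      ∀ σ : Fin n_con → ℝ, (∀ j, 0 < σ j) →
        y ⬝ᵥ ((Khat A P σ)⁻¹ *ᵥ y) ≤ Γf ^ 2 + ∑ j, (Γw j) ^ 2 / (σ j) ^ 2)
    ∧
    ((∃ θ : Fin r → ℝ, θ ⬝ᵥ θ < Γf ^ 2 ∧
        ∀ j, (y - Aᵀ *ᵥ θ) ⬝ᵥ (P j *ᵥ (y - Aᵀ *ᵥ θ)) < (Γw j) ^ 2) →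
      ∀ σ : Fin n_con → ℝ, (∀ j, 0 < σ j) →
        y ⬝ᵥ ((Khat A P σ)⁻¹ *ᵥ y) < Γf ^ 2 + ∑ j, (Γw j) ^ 2 / (σ j) ^ 2
        ∧ 0 < βfac A y Γf Γw P σ) := by
  constructor
  · rintro ⟨θ, hθ1, hθ2⟩ σ hσ
    have hW : (Pagg P σ).PosDef := Pagg_posDef P hP hPsum σ hσ
    set z := y - Aᵀ *ᵥ θ with hzdef
    have hkey := key_ineq r N A (Pagg P σ) hW y θ
    have hquad : z ⬝ᵥ (Pagg P σ *ᵥ z) = ∑ j, ((σ j)^2)⁻¹ * (z ⬝ᵥ (P j *ᵥ z)) := by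
      simp [Pagg, sum_mulVec', dotProduct_sum', smul_mulVec]
    have hsum : z ⬝ᵥ (Pagg P σ *ᵥ z) ≤ ∑ j, (Γw j)^2 / (σ j)^2 := by
      rw [hquad]
      apply Finset.sum_le_sum
      intro j _
      rw [div_eq_mul_inv, mul_comm ((Γw j)^2)]
      exact mul_le_mul_of_nonneg_left (hθ2 j) (by positivity)
    have : y ⬝ᵥ ((Khat A P σ)⁻¹ *ᵥ y) ≤ θ ⬝ᵥ θ + z ⬝ᵥ (Pagg P σ *ᵥ z) := hkey
    linarith
  · rintro ⟨θ, hθ1, hθ2⟩ σ hσ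
    have hW : (Pagg P σ).PosDef := Pagg_posDef P hP hPsum σ hσ
    set z := y - Aᵀ *ᵥ θ with hzdef
    have hkey := key_ineq r N A (Pagg P σ) hW y θ
    have hquad : z ⬝ᵥ (Pagg P σ *ᵥ z) = ∑ j, ((σ j)^2)⁻¹ * (z ⬝ᵥ (P j *ᵥ z)) := by
      simp [Pagg, sum_mulVec', dotProduct_sum', smul_mulVec]
    have hsum : z ⬝ᵥ (Pagg P σ *ᵥ z) ≤ ∑ j, (Γw j)^2 / (σ j)^2 := by
      rw [hquad]
      apply Finset.sum_le_sum
      intro j _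
      rw [div_eq_mul_inv, mul_comm ((Γw j)^2)]
      exact mul_le_mul_of_nonneg_left (le_of_lt (hθ2 j)) (by positivity)
    have hk : y ⬝ᵥ ((Khat A P σ)⁻¹ *ᵥ y) ≤ θ ⬝ᵥ θ + z ⬝ᵥ (Pagg P σ *ᵥ z) := hkey
    have hlt : y ⬝ᵥ ((Khat A P σ)⁻¹ *ᵥ y) < Γf ^ 2 + ∑ j, (Γw j)^2 / (σ j)^2 := by
      linarith
    refine ⟨hlt, ?_⟩
    unfold βfac
    exact Real.sqrt_pos.mpr (by linarith)
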